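/- Let ℓ ≥ 1 be an integer and let G be a finite simple graph that contains no path on ℓ vertices as a subgraph. Let φ be a minimal H-model in G and let v ∈ V(H) with deg_H(v) ≥ 1. Then |φ(v)| < deg_H(v) · ℓ. -/

import Mathlib

/-- An `H`-model in `G`: branch sets `φ v ⊆ V(G)` inducing connected subgraphs,
pairwise disjoint, with an edge of `G` between the branch sets of adjacent vertices of `H`. -/
def IsMinorModel {V W : Type*} (G : SimpleGraph V) (H : SimpleGraph W)
    (φ : W → Set V) : Prop :=
  (∀ v : W, (G.induce (φ v)).Connected) ∧
  (∀ u v : W, H.Adj u v → ∃ u' ∈ φ u, ∃ v' ∈ φ v, G.Adj u' v') ∧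
  (∀ u v : W, u ≠ v → Disjoint (φ u) (φ v))

/-- `H` is a minor of `G` (`H ⪯ G`) if an `H`-model in `G` exists. -/
def IsMinorOf {V W : Type*} (H : SimpleGraph W) (G : SimpleGraph V) : Prop :=
  ∃ φ : W → Set V, IsMinorModel G H φ

/-- A minimal `H`-model in `G`: no `H`-model is obtained by shrinking some branch set. -/
def IsMinimalMinorModel {V W : Type*} (G : SimpleGraph V) (H : SimpleGraph W)
    (φ : W → Set V) : Prop :=
  IsMinorModel G H φ ∧
  ¬ ∃ φ' : W → Set V, IsMinorModel G H φ' ∧ (∀ v, φ' v ⊆ φ v) ∧ (∃ u, φ' u ⊂ φ u)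

/-- `G` contains `H` as a subgraph: an injective map from `V(H)` to `V(G)`
mapping edges of `H` to edges of `G`. -/
def ContainsAsSubgraph {V W : Type*} (G : SimpleGraph V) (H : SimpleGraph W) : Prop :=
  ∃ f : W → V, Function.Injective f ∧ ∀ u v : W, H.Adj u v → G.Adj (f u) (f v)

open SimpleGraph

section helpers
variable {V : Type*} {G : SimpleGraph V}

lemma getVert_mem_support' {a b : V} (p : G.Walk a b) {i : ℕ} (hi : i ≤ p.length) :
    p.getVert i ∈ p.support :=
  Walk.mem_support_iff_exists_getVert.mpr ⟨i, rfl, hi⟩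

lemma path_getVert_inj {a b : V} {p : G.Walk a b} (hp : p.IsPath) :
    ∀ i ≤ p.length, ∀ j ≤ p.length, p.getVert i = p.getVert j → i = j := by
  induction p with
  | nil => intro i hi j hj _; simp only [Walk.length_nil, Nat.le_zero] at hi hj; omega
  | cons h q ih =>
    intro i hi j hj hij
    rw [Walk.cons_isPath_iff] at hp
    match i, j with
    | 0, 0 => rfl
    | 0, j+1 =>
      exfalso; apply hp.2
      rw [Walk.getVert_cons_succ] at hij
      simp only [Walk.getVert_zero] at hij
      rw [hij]
      exact getVert_mem_support' q (by simpa using hj)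
    | i+1, 0 =>
      exfalso; apply hp.2
      rw [Walk.getVert_cons_succ] at hij
      simp only [Walk.getVert_zero] at hij
      rw [← hij]
      exact getVert_mem_support' q (by simpa using hi)
    | i+1, j+1 =>
      rw [Walk.getVert_cons_succ, Walk.getVert_cons_succ] at hij
      have := ih hp.1 i (by simpa using hi) j (by simpa using hj) hij
      omega

lemma contains_of_long_path {ℓ : ℕ} {a b : V} (p : G.Walk a b) (hp : p.IsPath)
    (h : ℓ ≤ p.length + 1) : ContainsAsSubgraph G (SimpleGraph.pathGraph ℓ) := by
  refine ⟨fun i => p.getVert i, ?_, ?_⟩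
  · intro i j hij
    have hi : (i : ℕ) ≤ p.length := by have := i.2; omega
    have hj : (j : ℕ) ≤ p.length := by have := j.2; omega
    exact Fin.ext (path_getVert_inj hp i hi j hj hij)
  · intro u v huv
    rw [pathGraph_adj] at huv
    rcases huv with huv | huv
    · have hv : (v : ℕ) ≤ p.length := by have := v.2; omega
      have := p.adj_getVert_succ (i := (u : ℕ)) (by omega)
      rwa [huv] at this
    · have hu : (u : ℕ) ≤ p.length := by have := u.2; omega
      have := p.adj_getVert_succ (i := (v : ℕ)) (by omega)
      rw [huv] at this
      exact this.symm

lemma reachable_induce_of_walk {U : Set V} {a b : V} (p : G.Walk a b)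
    (hs : ∀ x ∈ p.support, x ∈ U) :
    (G.induce U).Reachable ⟨a, hs a p.start_mem_support⟩ ⟨b, hs b p.end_mem_support⟩ := by
  induction p with
  | nil => exact Reachable.refl _
  | @cons a c b h q ih =>
    have hs' : ∀ x ∈ q.support, x ∈ U := fun x hx => hs x (by simp [hx])
    have hadj : (G.induce U).Adj ⟨a, hs a ((Walk.cons h q).start_mem_support)⟩
        ⟨c, hs' c q.start_mem_support⟩ := h
    exact hadj.reachable.trans (ih hs')

end helpers

/-- Let `ℓ ≥ 1` and let `G` contain no path on `ℓ` vertices as a subgraph. If `φ` is a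
minimal `H`-model in `G` and `v ∈ V(H)` has `deg_H(v) ≥ 1`, then `|φ(v)| < deg_H(v) · ℓ`. -/
theorem stmt_12 {V W : Type*} [Fintype V] [Fintype W]
    (ℓ : ℕ) (hℓ : 1 ≤ ℓ)
    (G : SimpleGraph V) (hG : ¬ ContainsAsSubgraph G (SimpleGraph.pathGraph ℓ))
    (H : SimpleGraph W) (φ : W → Set V) (hφ : IsMinimalMinorModel G H φ)
    (v : W) (hv : 1 ≤ (H.neighborSet v).ncard) :
    (φ v).ncard < (H.neighborSet v).ncard * ℓ := by
  classical
  obtain ⟨⟨hconn, hedge, hdisj⟩, hmin⟩ := hφ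
  choose x hx y hy hxy using fun (u : W) (hu : H.Adj v u) => hedge v u hu
  obtain ⟨u₀, hu₀'⟩ := Set.nonempty_of_ncard_ne_zero (s := H.neighborSet v) (by omega)
  have hu₀ : H.Adj v u₀ := hu₀'
  -- key: for each neighbor u, a small set S containing x₀ and x u, with internal walks
  have key : ∀ (u : W) (hu : H.Adj v u), ∃ S : Set V,
      S ⊆ φ v ∧ x u₀ hu₀ ∈ S ∧ x u hu ∈ S ∧ S.ncard < ℓ ∧
      ∀ z ∈ S, ∃ p : G.Walk (x u₀ hu₀) z, ∀ t ∈ p.support, t ∈ S := by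
    intro u hu
    obtain ⟨q⟩ := (hconn v) ⟨x u₀ hu₀, hx u₀ hu₀⟩ ⟨x u hu, hx u hu⟩
    set q' : (G.induce (φ v)).Walk ⟨x u₀ hu₀, hx u₀ hu₀⟩ ⟨x u hu, hx u hu⟩ := q.toPath.1
    have hq' : q'.IsPath := q.toPath.2
    set P : G.Walk (x u₀ hu₀) (x u hu) :=
      q'.map (SimpleGraph.Embedding.induce (φ v)).toHom with hPdef
    have hP : P.IsPath := Walk.map_isPath_of_injective
      (fun a b hab => Subtype.ext hab) hq'
    have hPsub : ∀ t ∈ P.support, t ∈ φ v := by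
      intro t ht
      replace ht : t ∈ q'.support.map (SimpleGraph.Embedding.induce (G := G) (φ v)).toHom := by
        rw [← Walk.support_map]; exact ht
      obtain ⟨z, _, rfl⟩ := List.mem_map.mp ht
      exact z.2
    refine ⟨{t | t ∈ P.support}, hPsub, P.start_mem_support, P.end_mem_support, ?_, ?_⟩
    · have h1 : {t | t ∈ P.support}.ncard = P.support.length := by
        have : {t | t ∈ P.support} = (P.support.toFinset : Set V) := by ext t; simp
        rw [this, Set.ncard_coe_finset, List.toFinset_card_of_nodup hP.support_nodup]
      rw [h1, Walk.length_support]
      by_contra hcon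
      exact hG (contains_of_long_path P hP (by omega))
    · intro z hz
      exact ⟨P.takeUntil z hz, fun t ht => P.support_takeUntil_subset hz ht⟩
  choose S hS1 hS2 hS3 hS4 hS5 using key
  set U : Set V := ⋃ (u : W) (hu : H.Adj v u), S u hu with hUdef
  have hUsub : U ⊆ φ v := Set.iUnion₂_subset fun u hu => hS1 u hu
  have hxU : ∀ (u : W) (hu : H.Adj v u), x u hu ∈ U := fun u hu =>
    Set.mem_iUnion₂.mpr ⟨u, hu, hS3 u hu⟩
  have hx₀U : x u₀ hu₀ ∈ U := hxU u₀ hu₀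
  -- connectivity of the induced graph on U
  have hreachU : ∀ z : U, (G.induce U).Reachable ⟨x u₀ hu₀, hx₀U⟩ z := by
    rintro ⟨z, hz⟩
    obtain ⟨u, hu, hzS⟩ := Set.mem_iUnion₂.mp hz
    obtain ⟨p, hp⟩ := hS5 u hu z hzS
    have hps : ∀ t ∈ p.support, t ∈ U := fun t ht =>
      Set.mem_iUnion₂.mpr ⟨u, hu, hp t ht⟩
    exact reachable_induce_of_walk p hps
  have hUconn : (G.induce U).Connected := by
    rw [connected_iff]
    exact ⟨fun z₁ z₂ => (hreachU z₁).symm.trans (hreachU z₂), ⟨⟨x u₀ hu₀, hx₀U⟩⟩⟩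
  -- the shrunk model
  set φ' : W → Set V := fun w => if w = v then U else φ w with hφ'def
  have hφ'v : φ' v = U := by simp [hφ'def]
  have hφ'ne : ∀ w, w ≠ v → φ' w = φ w := by intro w hw; simp [hφ'def, hw]
  have hφ'sub : ∀ w, φ' w ⊆ φ w := by
    intro w
    by_cases hw : w = v
    · subst hw; rw [hφ'v]; exact hUsub
    · rw [hφ'ne w hw]
  have hmodel' : IsMinorModel G H φ' := by
    refine ⟨?_, ?_, ?_⟩
    · intro w
      by_cases hw : w = v
      · subst hw; rw [hφ'v]; exact hUconn
      · rw [hφ'ne w hw]; exact hconn w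
    · intro a b hab
      by_cases ha : a = v
      · subst ha
        have hb : b ≠ a := fun h => H.irrefl (h ▸ hab)
        refine ⟨x b hab, ?_, y b hab, ?_, hxy b hab⟩
        · rw [hφ'v]; exact hxU b hab
        · rw [hφ'ne b hb]; exact hy b hab
      · by_cases hb : b = v
        · subst hb
          have hab' : H.Adj b a := hab.symm
          refine ⟨y a hab', ?_, x a hab', ?_, (hxy a hab').symm⟩
          · rw [hφ'ne a ha]; exact hy a hab'
          · rw [hφ'v]; exact hxU a hab'
        · rw [hφ'ne a ha, hφ'ne b hb]
          exact hedge a b hab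
    · intro a b hne
      exact ((hdisj a b hne).mono (hφ'sub a) (hφ'sub b))
  -- minimality forces U = φ v
  have hUeq : U = φ v := by
    by_contra hne
    refine hmin ⟨φ', hmodel', hφ'sub, v, ?_⟩
    rw [hφ'v]
    exact HasSubset.Subset.ssubset_of_ne hUsub hne
  -- counting
  set F : Finset W := H.neighborFinset v with hFdef
  have hcard : (H.neighborSet v).ncard = F.card := by
    rw [hFdef, neighborFinset_def, ← Set.ncard_eq_toFinset_card']
  set Sf : W → Set V := fun u => if hu : H.Adj v u then S u hu else ∅ with hSfdef
  have hSfcard : ∀ u, (Sf u).ncard ≤ ℓ - 1 := by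
    intro u
    by_cases hu : H.Adj v u
    · simp only [hSfdef, dif_pos hu]
      have := hS4 u hu; omega
    · simp [hSfdef, dif_neg hu]
  have hUF : U = ⋃ u ∈ F, Sf u := by
    ext t
    simp only [hUdef, Set.mem_iUnion, hFdef, mem_neighborFinset, hSfdef]
    constructor
    · rintro ⟨u, hu, ht⟩; exact ⟨u, hu, by rw [dif_pos hu]; exact ht⟩
    · rintro ⟨u, hu, ht⟩; rw [dif_pos hu] at ht; exact ⟨u, hu, ht⟩
  have hbound : ∀ F' : Finset W, (⋃ u ∈ F', Sf u).ncard ≤ F'.card * (ℓ - 1) := by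
    intro F'
    induction F' using Finset.induction_on with
    | empty => simp
    | @insert a s hnm ih =>
      rw [Finset.set_biUnion_insert, Finset.card_insert_of_notMem hnm]
      refine le_trans (Set.ncard_union_le _ _) ?_
      rw [add_mul, one_mul]
      have h1 := hSfcard a
      omega
  have hfinal : (φ v).ncard ≤ F.card * (ℓ - 1) := by
    rw [← hUeq, hUF]; exact hbound F
  have hFpos : 0 < F.card := by rw [← hcard]; omega
  calc (φ v).ncard ≤ F.card * (ℓ - 1) := hfinal
    _ < F.card * ℓ := by
        exact mul_lt_mul_of_pos_left (by omega) hFpos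
    _ = (H.neighborSet v).ncard * ℓ := by rw [hcard]
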